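/- Let m ≥ 1 and let v_1, …, v_n ≥ 0 be weights in arbitrary arrival order (identical-basestations case). Then there exists a sequence of allocations f_k : Fin k → Fin m for k = 1, …, n such that: (i) for every k, f_k attains the maximum time-sharing utility over all allocations of the first k users, i.e., TS(f_k, (v_1,…,v_k)) = max_g TS(g, (v_1,…,v_k)); and (ii) for every k < n, the restriction of f_{k+1} to the first k users differs from f_k in at most one user. In other words, an online algorithm that may reassign at most one previously assigned user upon each arrival achieves the optimal offline utility (competitive ratio 1) for identical basestations. -/

import Mathlib

open Finset

noncomputable def TS {n m : ℕ} (f : Fin n → Fin m) (w : Fin n → Fin m → ℝ) : ℝ :=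
  ∑ j : Fin m, (∑ i ∈ Finset.univ.filter (fun i => f i = j), w i j) /
    ((Finset.univ.filter (fun i => f i = j)).card : ℝ)

namespace Stmt14

/-- Invariant: nonzero stations are singletons; the set of users on nonzero stations has
cardinality `min k (m-1)` and consists of top-valued users. -/
def Inv (m : ℕ) [NeZero m] (w : ℕ → ℝ) (k : ℕ) (f : Fin k → Fin m) : Prop :=
  (∀ i i' : Fin k, f i ≠ 0 → f i = f i' → i = i') ∧
  (Finset.univ.filter (fun i => f i ≠ 0)).card = min k (m - 1) ∧
  (∀ i i' : Fin k, f i ≠ 0 → f i' = 0 → w i' ≤ w i)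

lemma TS_eval {k m : ℕ} [NeZero m] (f : Fin k → Fin m) (a : Fin k → ℝ)
    (h1 : ∀ i i' : Fin k, f i ≠ 0 → f i = f i' → i = i') :
    TS f (fun i _ => a i) =
      (∑ i ∈ Finset.univ.filter (fun i => f i = 0), a i) /
        ((Finset.univ.filter (fun i => f i = 0)).card : ℝ)
      + ∑ i ∈ Finset.univ.filter (fun i => f i ≠ 0), a i := by
  have h0 : (0 : Fin m) ∈ (univ : Finset (Fin m)) := mem_univ _
  rw [show TS f (fun i _ => a i) = ∑ j : Fin m,
      (∑ i ∈ Finset.univ.filter (fun i => f i = j), a i) /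
        ((Finset.univ.filter (fun i => f i = j)).card : ℝ) from rfl,
    Finset.sum_eq_sum_sdiff_singleton_add h0, add_comm]
  congr 1
  have hsingle : ∀ j ∈ (univ : Finset (Fin m)) \ {0},
      (∑ i ∈ Finset.univ.filter (fun i => f i = j), a i) /
        ((Finset.univ.filter (fun i => f i = j)).card : ℝ)
      = ∑ i ∈ Finset.univ.filter (fun i => f i = j), a i := by
    intro j hj
    have hj0 : j ≠ 0 := by simpa using (mem_sdiff.mp hj).2
    have hcard : (Finset.univ.filter (fun i => f i = j)).card ≤ 1 := by
      refine Finset.card_le_one.mpr ?_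
      intro x hx y hy
      simp only [mem_filter] at hx hy
      exact h1 x y (hx.2 ▸ hj0) (hx.2.trans hy.2.symm)
    interval_cases h : (Finset.univ.filter (fun i => f i = j)).card
    · rw [Finset.card_eq_zero.mp h]; simp
    · simp
  rw [Finset.sum_congr rfl hsingle, Finset.sum_fiberwise_eq_sum_filter]
  apply Finset.sum_congr
  · apply Finset.filter_congr
    intro i _
    simp
  · intros; rfl


lemma TS_le {k m : ℕ} [NeZero m] (a : Fin k → ℝ) (ha : ∀ i, 0 ≤ a i)
    (f g : Fin k → Fin m)
    (h1 : ∀ i i' : Fin k, f i ≠ 0 → f i = f i' → i = i')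
    (h2 : (Finset.univ.filter (fun i => f i ≠ 0)).card = min k (m - 1))
    (h3 : ∀ i i' : Fin k, f i ≠ 0 → f i' = 0 → a i' ≤ a i) :
    TS g (fun i _ => a i) ≤ TS f (fun i _ => a i) := by
  classical
  have hm1 : 1 ≤ m := Nat.one_le_iff_ne_zero.mpr (NeZero.ne m)
  by_cases hm2 : m = 1
  · subst hm2
    have : g = f := funext fun i => Subsingleton.elim _ _
    rw [this]
  -- notation
  set T := Finset.univ.filter (fun i : Fin k => f i ≠ 0) with hTdef
  set Z := Finset.univ.filter (fun i : Fin k => f i = 0) with hZdef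
  have hTZ : Z.card + T.card = k := by
    have h := Finset.card_filter_add_card_filter_not
      (s := (Finset.univ : Finset (Fin k))) (p := fun i => f i = 0)
    simpa [hTdef, hZdef] using h
  have hTSg : TS g (fun i _ => a i) = ∑ j ∈ Finset.univ.image g,
      (∑ i ∈ Finset.univ.filter (fun i => g i = j), a i) /
        ((Finset.univ.filter (fun i => g i = j)).card : ℝ) := by
    rw [show TS g (fun i _ => a i) = ∑ j : Fin m,
      (∑ i ∈ Finset.univ.filter (fun i => g i = j), a i) /
        ((Finset.univ.filter (fun i => g i = j)).card : ℝ) from rfl]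
    refine (Finset.sum_subset (Finset.subset_univ _) ?_).symm
    intro j _ hj
    have : Finset.univ.filter (fun i => g i = j) = ∅ := by
      ext i; simp only [Finset.mem_filter, Finset.mem_univ, true_and, Finset.notMem_empty,
        iff_false]
      intro h; exact hj (h ▸ Finset.mem_image_of_mem g (Finset.mem_univ i))
    rw [this]; simp
  rw [TS_eval f a h1]
  by_cases hZ0 : Z.card = 0
  · -- no user on station 0 : all users are singletons
    have hZe : Z = ∅ := Finset.card_eq_zero.mp hZ0
    have hTu : T = Finset.univ := by
      apply Finset.eq_univ_of_card; rw [Fintype.card_fin]; omega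
    rw [← hZdef, ← hTdef, hZe, hTu]
    simp only [Finset.sum_empty, Finset.card_empty, Nat.cast_zero, zero_div, zero_add]
    calc TS g (fun i _ => a i)
        ≤ ∑ j ∈ Finset.univ.image g, ∑ i ∈ Finset.univ.filter (fun i => g i = j), a i := by
          rw [hTSg]
          apply Finset.sum_le_sum
          intro j _
          rcases Nat.eq_zero_or_pos (Finset.univ.filter (fun i => g i = j)).card with h | h
          · rw [Finset.card_eq_zero.mp h]; simp
          · exact div_le_self (Finset.sum_nonneg fun i _ => ha i) (by exact_mod_cast h)
      _ = ∑ i : Fin k, a i := by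
          rw [Finset.sum_fiberwise_eq_sum_filter]
          apply Finset.sum_congr _ (fun _ _ => rfl)
          refine Finset.filter_true_of_mem fun i _ => ?_
          exact Finset.mem_image_of_mem g (Finset.mem_univ i)
  -- main case : station 0 nonempty, m ≥ 2
  have hm2' : 2 ≤ m := by omega
  have hTm : T.card = m - 1 := by
    rcases min_cases k (m-1) with ⟨h, _⟩ | ⟨h, _⟩ <;> omega
  have hTne : T.Nonempty := Finset.card_pos.mp (by omega)
  obtain ⟨iθ, hiθ, hθmin⟩ := T.exists_min_image a hTne
  set θ := a iθ with hθdef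
  have hθ0 : 0 ≤ θ := ha iθ
  have hfiθ : f iθ ≠ 0 := (Finset.mem_filter.mp hiθ).2
  have hθout : ∀ i ∈ Z, a i ≤ θ := fun i hi => h3 iθ i hfiθ (Finset.mem_filter.mp hi).2
  set P := fun j : Fin m => Finset.univ.filter (fun i => g i = j) with hPdef
  set img := Finset.univ.image g with himgdef
  set s := img.card with hsdef
  have hginimg : ∀ i : Fin k, g i ∈ img := fun i => Finset.mem_image_of_mem g (Finset.mem_univ i)
  have hPpos : ∀ j ∈ img, 0 < (P j).card := by
    intro j hj
    obtain ⟨i, _, hi⟩ := Finset.mem_image.mp hj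
    exact Finset.card_pos.mpr ⟨i, by simp [hPdef, hi]⟩
  have hPTZ : ∀ j : Fin m, P j ∩ T ∪ P j ∩ Z = P j := by
    intro j; ext i
    simp only [Finset.mem_union, Finset.mem_inter, hTdef, hZdef, Finset.mem_filter,
      Finset.mem_univ, true_and]
    tauto
  have hPdisj : ∀ j : Fin m, Disjoint (P j ∩ T) (P j ∩ Z) := by
    intro j
    refine Finset.disjoint_left.mpr fun i hi hi' => ?_
    simp only [Finset.mem_inter, hTdef, hZdef, Finset.mem_filter, Finset.mem_univ,
      true_and] at hi hi'
    exact hi.2 hi'.2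
  -- step A : per-station bound
  have stepA : ∀ j ∈ img, (∑ i ∈ P j, a i) / ((P j).card : ℝ)
      ≤ θ + (∑ i ∈ P j ∩ T, (a i - θ)) - (∑ i ∈ P j ∩ Z, (θ - a i)) / ((P j).card : ℝ) := by
    intro j hj
    have hc : (0:ℝ) < ((P j).card : ℝ) := by exact_mod_cast hPpos j hj
    have hc1 : (1:ℝ) ≤ ((P j).card : ℝ) := by exact_mod_cast hPpos j hj
    have hsplit : ∑ i ∈ P j, a i = (∑ i ∈ P j ∩ T, a i) + (∑ i ∈ P j ∩ Z, a i) := by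
      rw [← Finset.sum_union (hPdisj j), hPTZ j]
    have hcardsplit : ((P j).card : ℝ) = ((P j ∩ T).card : ℝ) + ((P j ∩ Z).card : ℝ) := by
      have : (P j).card = (P j ∩ T).card + (P j ∩ Z).card := by
        rw [← Finset.card_union_of_disjoint (hPdisj j), hPTZ j]
      exact_mod_cast this
    have hAT : (0:ℝ) ≤ ∑ i ∈ P j ∩ T, (a i - θ) := by
      apply Finset.sum_nonneg
      intro i hi
      have := hθmin i (Finset.mem_inter.mp hi).2
      linarith
    have hnum : ∑ i ∈ P j, a i = ((P j).card : ℝ) * θ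
        + (∑ i ∈ P j ∩ T, (a i - θ)) - (∑ i ∈ P j ∩ Z, (θ - a i)) := by
      rw [hsplit, hcardsplit, Finset.sum_sub_distrib, Finset.sum_sub_distrib]
      simp only [Finset.sum_const, nsmul_eq_mul]
      ring
    rw [hnum, sub_div, add_div, mul_div_cancel_left₀ _ (ne_of_gt hc)]
    have := div_le_self hAT hc1
    linarith
  -- step B : summing over used stations
  have hATsum : ∑ j ∈ img, (∑ i ∈ P j ∩ T, (a i - θ)) = ∑ i ∈ T, (a i - θ) := by
    have e : ∀ j ∈ img, (∑ i ∈ P j ∩ T, (a i - θ)) = ∑ i ∈ T.filter (fun i => g i = j), (a i - θ) := by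
      intro j _
      apply Finset.sum_congr _ (fun _ _ => rfl)
      ext i
      simp only [Finset.mem_inter, hPdef, Finset.mem_filter, Finset.mem_univ, true_and]
      tauto
    rw [Finset.sum_congr rfl e, Finset.sum_fiberwise_eq_sum_filter]
    apply Finset.sum_congr _ (fun _ _ => rfl)
    exact Finset.filter_true_of_mem fun i _ => hginimg i
  have hBZsum : ∑ j ∈ img, (∑ i ∈ P j ∩ Z, (θ - a i)) / ((P j).card : ℝ)
      = ∑ i ∈ Z, (θ - a i) / ((P (g i)).card : ℝ) := by
    have e : ∀ j ∈ img, (∑ i ∈ P j ∩ Z, (θ - a i)) / ((P j).card : ℝ)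
        = ∑ i ∈ Z.filter (fun i => g i = j), (θ - a i) / ((P (g i)).card : ℝ) := by
      intro j _
      rw [Finset.sum_div]
      have hset : P j ∩ Z = Z.filter (fun i => g i = j) := by
        ext i
        simp only [Finset.mem_inter, hPdef, Finset.mem_filter, Finset.mem_univ, true_and]
        tauto
      rw [hset]
      apply Finset.sum_congr rfl
      intro i hi
      rw [(Finset.mem_filter.mp hi).2]
    rw [Finset.sum_congr rfl e, Finset.sum_fiberwise_eq_sum_filter]
    apply Finset.sum_congr _ (fun _ _ => rfl)
    exact Finset.filter_true_of_mem fun i _ => hginimg i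
  have sumA : TS g (fun i _ => a i) ≤ (s:ℝ) * θ + (∑ i ∈ T, (a i - θ))
      - ∑ i ∈ Z, (θ - a i) / ((P (g i)).card : ℝ) := by
    rw [hTSg]
    calc ∑ j ∈ img, (∑ i ∈ P j, a i) / ((P j).card : ℝ)
        ≤ ∑ j ∈ img, (θ + (∑ i ∈ P j ∩ T, (a i - θ))
            - (∑ i ∈ P j ∩ Z, (θ - a i)) / ((P j).card : ℝ)) := Finset.sum_le_sum stepA
      _ = (s:ℝ) * θ + (∑ i ∈ T, (a i - θ)) - ∑ i ∈ Z, (θ - a i) / ((P (g i)).card : ℝ) := by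
          rw [Finset.sum_sub_distrib, Finset.sum_add_distrib, hATsum, hBZsum,
            Finset.sum_const, nsmul_eq_mul]
  -- notation for the rest
  set z := ((Z.card : ℕ) : ℝ) with hzdef
  have hz1 : (1:ℝ) ≤ z := by
    have : 1 ≤ Z.card := by omega
    rw [hzdef]; exact_mod_cast this
  have hz0 : (0:ℝ) < z := by linarith
  -- step D : pointwise bound by max
  have stepD : ∀ i ∈ Z, (θ - a i) / z - (θ - a i) / ((P (g i)).card : ℝ)
      ≤ θ * max 0 (1/z - 1/((P (g i)).card : ℝ)) := by
    intro i hi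
    have h0i : 0 ≤ θ - a i := by have := hθout i hi; linarith
    have hθi : θ - a i ≤ θ := by have := ha i; linarith
    have e : (θ - a i) / z - (θ - a i) / ((P (g i)).card : ℝ)
        = (θ - a i) * (1/z - 1/((P (g i)).card : ℝ)) := by ring
    rw [e]
    rcases le_or_gt 0 (1/z - 1/((P (g i)).card : ℝ)) with h | h
    · rw [max_eq_right h]
      exact mul_le_mul_of_nonneg_right hθi h
    · rw [max_eq_left h.le]
      have : (θ - a i) * (1/z - 1/((P (g i)).card : ℝ)) ≤ 0 :=
        mul_nonpos_of_nonneg_of_nonpos h0i h.le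
      simpa using this
  -- step E : the combinatorial bound
  have stepE : ∑ i ∈ Z, max 0 (1/z - 1/((P (g i)).card : ℝ)) ≤ (m:ℝ) - (s:ℝ) := by
    have hsm : (s:ℝ) ≤ (m:ℝ) := by
      have : s ≤ m := le_trans (Finset.card_le_univ img) (by simp)
      exact_mod_cast this
    -- group by station
    have grp : ∑ i ∈ Z, max 0 (1/z - 1/((P (g i)).card : ℝ))
        = ∑ j ∈ img, ((Z.filter (fun i => g i = j)).card : ℝ) * max 0 (1/z - 1/((P j).card : ℝ)) := by
      rw [show (∑ j ∈ img, ((Z.filter (fun i => g i = j)).card : ℝ)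
            * max 0 (1/z - 1/((P j).card : ℝ)))
          = ∑ j ∈ img, ∑ i ∈ Z.filter (fun i => g i = j), max 0 (1/z - 1/((P (g i)).card : ℝ))
          from ?_]
      · rw [Finset.sum_fiberwise_eq_sum_filter]
        refine (Finset.sum_congr ?_ (fun _ _ => rfl)).symm
        exact Finset.filter_true_of_mem fun i _ => hginimg i
      · apply Finset.sum_congr rfl
        intro j _
        rw [Finset.sum_congr rfl (fun i hi => by rw [(Finset.mem_filter.mp hi).2]),
          Finset.sum_const, nsmul_eq_mul]
    rw [grp]
    set Big := img.filter (fun j => Z.card < (P j).card) with hBigdef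
    have bnd : ∑ j ∈ img, ((Z.filter (fun i => g i = j)).card : ℝ) * max 0 (1/z - 1/((P j).card : ℝ))
        ≤ ∑ j ∈ Big, (1 - z/((P j).card : ℝ)) := by
      rw [hBigdef, Finset.sum_filter]
      apply Finset.sum_le_sum
      intro j hj
      have hc1 : (1:ℝ) ≤ ((P j).card : ℝ) := by exact_mod_cast hPpos j hj
      have hc0 : (0:ℝ) < ((P j).card : ℝ) := by linarith
      by_cases hbig : Z.card < (P j).card
      · rw [if_pos hbig]
        have hzc : z ≤ ((P j).card : ℝ) := by
          have : Z.card ≤ (P j).card := hbig.le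
          rw [hzdef]; exact_mod_cast this
        have hmx : (0:ℝ) ≤ 1/z - 1/((P j).card : ℝ) := by
          have := one_div_le_one_div_of_le hz0 hzc
          linarith
        rw [max_eq_right hmx]
        have hcard : ((Z.filter (fun i => g i = j)).card : ℝ) ≤ z := by
          have := Finset.card_filter_le Z (fun i => g i = j)
          rw [hzdef]; exact_mod_cast this
        calc ((Z.filter (fun i => g i = j)).card : ℝ) * (1/z - 1/((P j).card : ℝ))
            ≤ z * (1/z - 1/((P j).card : ℝ)) := mul_le_mul_of_nonneg_right hcard hmx
          _ = 1 - z/((P j).card : ℝ) := by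
              field_simp
      · rw [if_neg hbig]
        have hcz : ((P j).card : ℝ) ≤ z := by
          have : (P j).card ≤ Z.card := by omega
          rw [hzdef]; exact_mod_cast this
        have : 1/z - 1/((P j).card : ℝ) ≤ 0 := by
          have := one_div_le_one_div_of_le hc0 hcz
          linarith
        rw [max_eq_left this, mul_zero]
    refine le_trans bnd ?_
    rcases Big.eq_empty_or_nonempty with hB | ⟨jstar, hjstar⟩
    · rw [hB]; rw [Finset.sum_empty]; linarith
    · -- accounting
      have hBig_prop : ∀ j ∈ Big, Z.card < (P j).card := fun j hj =>
        (Finset.mem_filter.mp hj).2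
      have hBig_sub : Big ⊆ img := Finset.filter_subset _ _
      have hsum_p : ∑ j ∈ img, ((P j).card : ℝ) = (k:ℝ) := by
        have h1' : ∑ j ∈ (Finset.univ : Finset (Fin m)), (P j).card = k := by
          rw [hPdef]
          rw [Finset.sum_card_fiberwise_eq_card_filter]
          simp
        have h2' : ∑ j ∈ img, (P j).card = k := by
          rw [Finset.sum_subset (Finset.subset_univ img) ?_]
          · exact h1'
          · intro j _ hj
            by_contra hne
            have : 0 < (P j).card := Nat.pos_of_ne_zero hne
            obtain ⟨i, hi⟩ := Finset.card_pos.mp this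
            exact hj (by
              have : g i = j := by
                have := Finset.mem_filter.mp hi
                exact this.2
              exact this ▸ hginimg i)
        exact_mod_cast h2'
      set Small := img.filter (fun j => ¬ Z.card < (P j).card) with hSmalldef
      have hsplit2 : ∑ j ∈ Big, ((P j).card : ℝ) + ∑ j ∈ Small, ((P j).card : ℝ)
          = ∑ j ∈ img, ((P j).card : ℝ) := by
        rw [hBigdef, hSmalldef]
        exact Finset.sum_filter_add_sum_filter_not img _ _
      have hscard : (Big.card : ℕ) + Small.card = s := by
        have := Finset.card_filter_add_card_filter_not
          (s := img) (p := fun j => Z.card < (P j).card)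
        rw [hBigdef, hSmalldef, hsdef]
        exact this
      have hsmall_le : ((Small.card : ℕ) : ℝ) ≤ ∑ j ∈ Small, ((P j).card : ℝ) := by
        rw [Finset.card_eq_sum_ones Small]
        push_cast
        apply Finset.sum_le_sum
        intro j hj
        have : 0 < (P j).card := hPpos j (Finset.mem_filter.mp hj).1
        exact_mod_cast this
      have hterm_nonneg : ∀ j ∈ Big, (0:ℝ) ≤ ((P j).card : ℝ) + z/((P j).card : ℝ) - 2 := by
        intro j hj
        have hbig := hBig_prop j hj
        have hcz : z + 1 ≤ ((P j).card : ℝ) := by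
          have : Z.card + 1 ≤ (P j).card := hbig
          rw [hzdef]; exact_mod_cast this
        have hc0 : (0:ℝ) < ((P j).card : ℝ) := by linarith
        have : 0 ≤ z/((P j).card : ℝ) := div_nonneg (by linarith) hc0.le
        linarith
      have hkey : z - 1 ≤ ∑ j ∈ Big, (((P j).card : ℝ) + z/((P j).card : ℝ) - 2) := by
        have hjs := hBig_prop jstar hjstar
        have hcz : z + 1 ≤ ((P jstar).card : ℝ) := by
          have : Z.card + 1 ≤ (P jstar).card := hjs
          rw [hzdef]; exact_mod_cast this
        have hc0 : (0:ℝ) < ((P jstar).card : ℝ) := by linarith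
        have hzdiv : 0 ≤ z/((P jstar).card : ℝ) := div_nonneg (by linarith) hc0.le
        have hone : z - 1 ≤ ((P jstar).card : ℝ) + z/((P jstar).card : ℝ) - 2 := by linarith
        exact le_trans hone (Finset.single_le_sum hterm_nonneg hjstar)
      -- put the accounting together
      have hmk : (m:ℝ) = (k:ℝ) - z + 1 := by
        have e1 : (T.card : ℝ) = (m:ℝ) - 1 := by
          rw [hTm]
          push_cast [Nat.cast_sub hm1]
          ring
        have e2 : z + (T.card : ℝ) = (k:ℝ) := by rw [hzdef]; exact_mod_cast hTZ
        linarith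
      have hexpand : ∑ j ∈ Big, (((P j).card : ℝ) + z/((P j).card : ℝ) - 2)
          = ∑ j ∈ Big, ((P j).card : ℝ) + ∑ j ∈ Big, z/((P j).card : ℝ)
            - 2 * (Big.card : ℝ) := by
        rw [Finset.sum_sub_distrib, Finset.sum_add_distrib, Finset.sum_const, nsmul_eq_mul]
        ring
      have hgoal_exp : ∑ j ∈ Big, (1 - z/((P j).card : ℝ))
          = (Big.card : ℝ) - ∑ j ∈ Big, z/((P j).card : ℝ) := by
        rw [Finset.sum_sub_distrib, Finset.sum_const, nsmul_eq_mul]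
        ring
      have hscast : ((Big.card : ℕ) : ℝ) + ((Small.card : ℕ) : ℝ) = (s:ℝ) := by
        exact_mod_cast hscard
      rw [hgoal_exp]
      rw [hexpand] at hkey
      linarith
  -- final assembly
  have hVW : ∑ i ∈ Z, (θ - a i)/z - ∑ i ∈ Z, (θ - a i) / ((P (g i)).card : ℝ)
      ≤ θ * ((m:ℝ) - (s:ℝ)) := by
    rw [← Finset.sum_sub_distrib]
    calc ∑ i ∈ Z, ((θ - a i)/z - (θ - a i) / ((P (g i)).card : ℝ))
        ≤ ∑ i ∈ Z, θ * max 0 (1/z - 1/((P (g i)).card : ℝ)) := Finset.sum_le_sum stepD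
      _ = θ * ∑ i ∈ Z, max 0 (1/z - 1/((P (g i)).card : ℝ)) := by rw [Finset.mul_sum]
      _ ≤ θ * ((m:ℝ) - (s:ℝ)) := mul_le_mul_of_nonneg_left stepE hθ0
  have hTsum : ∑ i ∈ T, a i = ∑ i ∈ T, (a i - θ) + (T.card : ℝ) * θ := by
    rw [Finset.sum_sub_distrib, Finset.sum_const, nsmul_eq_mul]
    ring
  have hZsum : (∑ i ∈ Z, a i) / z = θ - ∑ i ∈ Z, (θ - a i)/z := by
    rw [← Finset.sum_div, eq_sub_iff_add_eq, ← add_div]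
    have : ∑ i ∈ Z, a i + ∑ i ∈ Z, (θ - a i) = z * θ := by
      rw [← Finset.sum_add_distrib]
      simp [Finset.sum_const, nsmul_eq_mul, hzdef]
    rw [this, mul_comm, mul_div_assoc, div_self (ne_of_gt hz0), mul_one]
  have hTcast : (T.card : ℝ) = (m:ℝ) - 1 := by
    rw [hTm]
    push_cast [Nat.cast_sub hm1]
    ring
  rw [← hZdef, ← hTdef, hZsum, hTsum, hTcast]
  have hθms : θ * ((m:ℝ) - (s:ℝ)) = θ * (m:ℝ) - θ * (s:ℝ) := by ring
  rw [hθms] at hVW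
  linarith [sumA]



lemma card_filter_succ {k : ℕ} (Pr : Fin (k+1) → Prop) [DecidablePred Pr] :
    (Finset.univ.filter Pr).card =
      (Finset.univ.filter (fun i : Fin k => Pr i.castSucc)).card
        + (if Pr (Fin.last k) then 1 else 0) := by
  rw [Finset.card_filter, Finset.card_filter, Fin.sum_univ_castSucc]

open Classical in
noncomputable def stepFun (m : ℕ) [NeZero m] (w : ℕ → ℝ) {k : ℕ} (f : Fin k → Fin m) :
    Fin (k+1) → Fin m :=
  if hfr : (Finset.univ.filter (fun i => f i ≠ 0)).card < m - 1
      ∧ ∃ j : Fin m, j ≠ 0 ∧ ∀ i, f i ≠ j then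
    Fin.lastCases hfr.2.choose f
  else if hd : ∃ i₀ : Fin k, f i₀ ≠ 0 ∧ (∀ i : Fin k, f i ≠ 0 → w i₀ ≤ w i) ∧ w i₀ < w k then
    Fin.lastCases (f hd.choose) (Function.update f hd.choose 0)
  else Fin.lastCases 0 f

lemma exists_fresh {k m : ℕ} [NeZero m] (f : Fin k → Fin m) (hk : k + 1 < m) :
    ∃ j : Fin m, j ≠ 0 ∧ ∀ i, f i ≠ j := by
  classical
  have hcard : (insert (0:Fin m) (Finset.univ.image f)).card < m := by
    calc (insert (0:Fin m) (Finset.univ.image f)).card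
        ≤ (Finset.univ.image f).card + 1 := Finset.card_insert_le _ _
      _ ≤ k + 1 := by
          have h := Finset.card_image_le (s := (Finset.univ : Finset (Fin k))) (f := f)
          simp only [Finset.card_univ, Fintype.card_fin] at h
          omega
      _ < m := hk
  obtain ⟨j, hj⟩ : ∃ j : Fin m, j ∉ insert 0 (Finset.univ.image f) := by
    by_contra h
    push_neg at h
    have hsub : (Finset.univ : Finset (Fin m)) ⊆ insert 0 (Finset.univ.image f) :=
      fun j _ => h j
    have := Finset.card_le_card hsub
    rw [Finset.card_univ, Fintype.card_fin] at this
    omega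
  refine ⟨j, ?_, ?_⟩
  · intro h0; exact hj (h0 ▸ Finset.mem_insert_self _ _)
  · intro i hi
    exact hj (Finset.mem_insert_of_mem (hi ▸ Finset.mem_image_of_mem f (Finset.mem_univ i)))

lemma stepFun_diff (m : ℕ) [NeZero m] (w : ℕ → ℝ) {k : ℕ} (f : Fin k → Fin m) :
    (Finset.univ.filter (fun i : Fin k => stepFun m w f i.castSucc ≠ f i)).card ≤ 1 := by
  classical
  by_cases hfr : (Finset.univ.filter (fun i => f i ≠ 0)).card < m - 1
      ∧ ∃ j : Fin m, j ≠ 0 ∧ ∀ i, f i ≠ j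
  · have hs : stepFun m w f = Fin.lastCases hfr.2.choose f := by
      unfold stepFun; rw [dif_pos hfr]
    rw [hs]
    simp [Fin.lastCases_castSucc]
  · by_cases hd : ∃ i₀ : Fin k, f i₀ ≠ 0 ∧ (∀ i : Fin k, f i ≠ 0 → w i₀ ≤ w i) ∧ w i₀ < w k
    · have hs : stepFun m w f = Fin.lastCases (f hd.choose) (Function.update f hd.choose 0) := by
        unfold stepFun; rw [dif_neg hfr, dif_pos hd]
      rw [hs]
      apply Finset.card_le_one.mpr
      intro x hx y hy
      simp only [Finset.mem_filter, Fin.lastCases_castSucc] at hx hy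
      have hx' : x = hd.choose := by
        by_contra hne
        exact hx.2 (Function.update_of_ne hne _ _)
      have hy' : y = hd.choose := by
        by_contra hne
        exact hy.2 (Function.update_of_ne hne _ _)
      rw [hx', hy']
    · have hs : stepFun m w f = Fin.lastCases 0 f := by
        unfold stepFun; rw [dif_neg hfr, dif_neg hd]
      rw [hs]
      simp [Fin.lastCases_castSucc]

lemma inv_step (m : ℕ) [NeZero m] (w : ℕ → ℝ) {k : ℕ} (f : Fin k → Fin m)
    (hf : Inv m w k f) : Inv m w (k+1) (stepFun m w f) := by
  classical
  obtain ⟨hf1, hf2, hf3⟩ := hf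
  have hm1 : 1 ≤ m := Nat.one_le_iff_ne_zero.mpr (NeZero.ne m)
  by_cases hfr : (Finset.univ.filter (fun i => f i ≠ 0)).card < m - 1
      ∧ ∃ j : Fin m, j ≠ 0 ∧ ∀ i, f i ≠ j
  · -- fresh-station branch
    have hs : stepFun m w f = Fin.lastCases hfr.2.choose f := by
      unfold stepFun; rw [dif_pos hfr]
    obtain ⟨hj0, hjfr⟩ := hfr.2.choose_spec
    rw [hs]
    have hkm : k < m - 1 := by
      have h := hfr.1
      rw [hf2] at h
      omega
    have hTall : ∀ i, f i ≠ 0 := by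
      have hcard : (Finset.univ.filter (fun i : Fin k => f i ≠ 0)).card = k := by
        rw [hf2]; omega
      have huniv : Finset.univ.filter (fun i : Fin k => f i ≠ 0) = Finset.univ :=
        Finset.eq_univ_of_card _ (by rw [hcard, Fintype.card_fin])
      intro i
      have hmem : i ∈ Finset.univ.filter (fun i : Fin k => f i ≠ 0) := by
        rw [huniv]; exact Finset.mem_univ i
      exact (Finset.mem_filter.mp hmem).2
    refine ⟨?_, ?_, ?_⟩
    · intro i i' hi hii'
      rcases Fin.eq_castSucc_or_eq_last i with ⟨i, rfl⟩ | rfl <;>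
        rcases Fin.eq_castSucc_or_eq_last i' with ⟨i', rfl⟩ | rfl <;>
        simp only [Fin.lastCases_castSucc, Fin.lastCases_last] at hi hii'
      · exact congrArg Fin.castSucc (hf1 i i' hi hii')
      · exact absurd hii' (hjfr i)
      · exact absurd hii'.symm (hjfr i')
      · rfl
    · rw [card_filter_succ]
      simp only [Fin.lastCases_castSucc, Fin.lastCases_last]
      rw [if_pos hj0, hf2]
      omega
    · intro i i' hi hi'
      rcases Fin.eq_castSucc_or_eq_last i with ⟨i, rfl⟩ | rfl <;>
        rcases Fin.eq_castSucc_or_eq_last i' with ⟨i', rfl⟩ | rfl <;>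
        simp only [Fin.lastCases_castSucc, Fin.lastCases_last] at hi hi' ⊢
      · simp only [Fin.coe_castSucc]
        exact hf3 i i' hi hi'
      · exact absurd hi' hj0
      · exact absurd hi' (hTall i')
      · exact absurd hi' hj0
  · have hcardT : (Finset.univ.filter (fun i : Fin k => f i ≠ 0)).card = m - 1 ∧ m - 1 ≤ k := by
      by_cases hlt : k < m - 1
      · exfalso
        exact hfr ⟨by rw [hf2]; omega, exists_fresh f (by omega)⟩
      · constructor
        · rw [hf2]; omega
        · omega
    by_cases hd : ∃ i₀ : Fin k, f i₀ ≠ 0 ∧ (∀ i : Fin k, f i ≠ 0 → w i₀ ≤ w i) ∧ w i₀ < w k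
    · -- displacement branch
      have hs : stepFun m w f = Fin.lastCases (f hd.choose) (Function.update f hd.choose 0) := by
        unfold stepFun; rw [dif_neg hfr, dif_pos hd]
      obtain ⟨hi₀0, hi₀min, hi₀lt⟩ := hd.choose_spec
      set i₀ := hd.choose with hi₀def
      rw [hs]
      refine ⟨?_, ?_, ?_⟩
      · intro i i' hi hii'
        rcases Fin.eq_castSucc_or_eq_last i with ⟨i, rfl⟩ | rfl <;>
          rcases Fin.eq_castSucc_or_eq_last i' with ⟨i', rfl⟩ | rfl <;>
          simp only [Fin.lastCases_castSucc, Fin.lastCases_last] at hi hii'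
        · have hii₀ : i ≠ i₀ := by
            rintro rfl
            rw [Function.update_self] at hi
            exact hi rfl
          have hfi : f i ≠ 0 := by rwa [Function.update_of_ne hii₀] at hi
          rw [Function.update_of_ne hii₀] at hii'
          by_cases h' : i' = i₀
          · subst h'
            rw [Function.update_self] at hii'
            exact absurd hii' hfi
          · rw [Function.update_of_ne h'] at hii'
            exact congrArg Fin.castSucc (hf1 i i' hfi hii')
        · exfalso
          have hii₀ : i ≠ i₀ := by
            rintro rfl
            rw [Function.update_self] at hi
            exact hi rfl
          have hfi : f i ≠ 0 := by rwa [Function.update_of_ne hii₀] at hi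
          rw [Function.update_of_ne hii₀] at hii'
          exact hii₀ (hf1 i i₀ hfi hii')
        · exfalso
          by_cases h' : i' = i₀
          · subst h'
            rw [Function.update_self] at hii'
            exact hi hii'
          · rw [Function.update_of_ne h'] at hii'
            exact h' (hf1 i₀ i' hi hii').symm
        · rfl
      · rw [card_filter_succ]
        simp only [Fin.lastCases_castSucc, Fin.lastCases_last]
        rw [if_pos hi₀0]
        have hset : Finset.univ.filter (fun i : Fin k => Function.update f i₀ 0 i ≠ 0)
            = (Finset.univ.filter (fun i => f i ≠ 0)).erase i₀ := by
          ext i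
          simp only [Finset.mem_filter, Finset.mem_erase, Finset.mem_univ, true_and]
          by_cases h : i = i₀
          · subst h
            simp [Function.update_self]
          · simp [Function.update_of_ne h, h]
        rw [hset, Finset.card_erase_of_mem (by simp [hi₀0]), hcardT.1]
        have h1T : 1 ≤ m - 1 := by
          have hmem : i₀ ∈ Finset.univ.filter (fun i : Fin k => f i ≠ 0) := by simp [hi₀0]
          have := Finset.card_pos.mpr ⟨i₀, hmem⟩
          omega
        omega
      · intro i i' hi hi'
        rcases Fin.eq_castSucc_or_eq_last i' with ⟨i', rfl⟩ | rfl
        swap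
        · simp only [Fin.lastCases_last] at hi'
          exact absurd hi' hi₀0
        rcases Fin.eq_castSucc_or_eq_last i with ⟨i, rfl⟩ | rfl <;>
          simp only [Fin.lastCases_castSucc, Fin.lastCases_last] at hi hi' <;>
          simp only [Fin.coe_castSucc, Fin.val_last]
        · have hii₀ : i ≠ i₀ := by
            rintro rfl
            rw [Function.update_self] at hi
            exact hi rfl
          have hfi : f i ≠ 0 := by rwa [Function.update_of_ne hii₀] at hi
          by_cases h' : i' = i₀
          · subst h'
            exact hi₀min i hfi
          · rw [Function.update_of_ne h'] at hi'
            exact hf3 i i' hfi hi'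
        · by_cases h' : i' = i₀
          · subst h'
            exact hi₀lt.le
          · rw [Function.update_of_ne h'] at hi'
            exact (hf3 i₀ i' hi₀0 hi').trans hi₀lt.le
    · -- no-change branch
      have hs : stepFun m w f = Fin.lastCases 0 f := by
        unfold stepFun; rw [dif_neg hfr, dif_neg hd]
      rw [hs]
      push_neg at hd
      refine ⟨?_, ?_, ?_⟩
      · intro i i' hi hii'
        rcases Fin.eq_castSucc_or_eq_last i with ⟨i, rfl⟩ | rfl <;>
          rcases Fin.eq_castSucc_or_eq_last i' with ⟨i', rfl⟩ | rfl <;>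
          simp only [Fin.lastCases_castSucc, Fin.lastCases_last] at hi hii'
        · exact congrArg Fin.castSucc (hf1 i i' hi hii')
        · exact absurd hii' hi
        · exact absurd rfl hi
        · rfl
      · rw [card_filter_succ]
        simp only [Fin.lastCases_castSucc, Fin.lastCases_last]
        rw [if_neg (by simp), hf2]
        omega
      · intro i i' hi hi'
        rcases Fin.eq_castSucc_or_eq_last i with ⟨i, rfl⟩ | rfl
        swap
        · simp only [Fin.lastCases_last] at hi
          exact absurd rfl hi
        rcases Fin.eq_castSucc_or_eq_last i' with ⟨i', rfl⟩ | rfl <;>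
          simp only [Fin.lastCases_castSucc, Fin.lastCases_last] at hi hi' <;>
          simp only [Fin.coe_castSucc, Fin.val_last]
        · exact hf3 i i' hi hi'
        · obtain ⟨i₀, hi₀T, hmin⟩ := Finset.exists_min_image
            (Finset.univ.filter (fun i : Fin k => f i ≠ 0)) (fun i => w ↑i) ⟨i, by simp [hi]⟩
          have h0 : f i₀ ≠ 0 := (Finset.mem_filter.mp hi₀T).2
          have hmin' : ∀ i', f i' ≠ 0 → w ↑i₀ ≤ w ↑i' := fun i' h => hmin i' (by simp [h])
          exact (hd i₀ h0 hmin').trans (hmin' i hi)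

lemma inv_zero (m : ℕ) [NeZero m] (w : ℕ → ℝ) : Inv m w 0 Fin.elim0 :=
  ⟨fun i => i.elim0, by simp, fun i => i.elim0⟩

noncomputable def chain (m : ℕ) [NeZero m] (w : ℕ → ℝ) :
    (k : ℕ) → {f : Fin k → Fin m // Inv m w k f}
  | 0 => ⟨Fin.elim0, inv_zero m w⟩
  | (k+1) => ⟨stepFun m w (chain m w k).1, inv_step m w _ (chain m w k).2⟩

end Stmt14

/-- identical basestations, reassignment of at most one user per arrival.
There is a sequence of allocations `F k : Fin k → Fin m` such that (i) each `F k` attains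
the maximum time-sharing utility over all allocations of the first `k` users, and
(ii) `F (k+1)` restricted to the first `k` users differs from `F k` in at most one user.
So an online algorithm allowed one reassignment per arrival achieves the offline optimum. -/
theorem stmt14 (n m : ℕ) (hm : 1 ≤ m) (v : Fin n → ℝ) (hnn : ∀ i, 0 ≤ v i) :
    ∃ F : (k : ℕ) → Fin k → Fin m,
      (∀ (k : ℕ) (hk : k ≤ n), ∀ g : Fin k → Fin m,
          TS g (fun i _ => v ⟨(i : ℕ), lt_of_lt_of_le i.isLt hk⟩)
            ≤ TS (F k) (fun i _ => v ⟨(i : ℕ), lt_of_lt_of_le i.isLt hk⟩))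
      ∧ (∀ k : ℕ, k + 1 ≤ n →
          (Finset.univ.filter (fun i : Fin k => F (k + 1) i.castSucc ≠ F k i)).card ≤ 1) := by
  haveI : NeZero m := ⟨by omega⟩
  classical
  set w : ℕ → ℝ := fun i => if h : i < n then v ⟨i, h⟩ else 0 with hwdef
  have hw0 : ∀ i, 0 ≤ w i := by
    intro i
    by_cases h : i < n
    · simp only [hwdef, dif_pos h]; exact hnn _
    · simp only [hwdef, dif_neg h]; exact le_refl (0:ℝ)
  refine ⟨fun k => (Stmt14.chain m w k).1, ?_, ?_⟩
  · intro k hk g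
    have hfun : (fun (i : Fin k) (_ : Fin m) => v ⟨(i : ℕ), lt_of_lt_of_le i.isLt hk⟩)
        = (fun (i : Fin k) (_ : Fin m) => w ↑i) := by
      funext i j
      simp only [hwdef]
      rw [dif_pos (lt_of_lt_of_le i.isLt hk)]
    rw [hfun]
    obtain ⟨h1, h2, h3⟩ := (Stmt14.chain m w k).2
    exact Stmt14.TS_le (fun i : Fin k => w ↑i) (fun i => hw0 ↑i) _ g h1 h2
      (fun i i' hi hi' => h3 i i' hi hi')
  · intro k _
    exact Stmt14.stepFun_diff m w (Stmt14.chain m w k).1
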